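/- Let b : [0,T] × T^d → R^d be a Borel vector field with ∫_0^T ∫_{T^d} |b(s,x)|^2 dx ds < ∞, and let η be a Borel probability measure on Γ_T concentrated on integral curves of b with (e_s)_#η = L^d for every s ∈ [0,T]. For N ∈ N let K_N := {γ ∈ Γ_T : γ is absolutely continuous and ∫_0^T |γ'(s)|^2 ds ≤ N}. Then each K_N is a compact subset of Γ_T, and η(Γ_T \ K_N) ≤ (1/N) ∫_0^T ∫_{T^d} |b(s,x)|^2 dx ds; in particular η is tight. -/

import Mathlib

open MeasureTheory Set Filter Topology
open scoped ENNReal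

noncomputable section

/-- The `d`-dimensional flat torus `ℝ^d/ℤ^d`. -/
abbrev Torus (d : ℕ) : Type := Fin d → AddCircle (1 : ℝ)

/-- Values of vector fields: `ℝ^d` with the Euclidean norm. -/
abbrev Vec (d : ℕ) : Type := EuclideanSpace ℝ (Fin d)

/-- The canonical projection `ℝ^d → 𝕋^d`. -/
def projT (d : ℕ) (x : Vec d) : Torus d := fun i => (x i : AddCircle (1 : ℝ))

/-- The path space `Γ_T = C([0,T]; 𝕋^d)` with the supremum metric. -/
abbrev PathSpace (T : ℝ) (d : ℕ) : Type := C(Set.Icc (0 : ℝ) T, Torus d)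

instance (T : ℝ) (d : ℕ) : MeasurableSpace (PathSpace T d) := borel _
instance (T : ℝ) (d : ℕ) : BorelSpace (PathSpace T d) := ⟨rfl⟩

/-- Extension of a path `γ : [0,T] → 𝕋^d` to all of `ℝ` by projection onto `[0,T]`. -/
def extendPath {T : ℝ} {d : ℕ} (hT : 0 ≤ T) (γ : PathSpace T d) : ℝ → Torus d :=
  fun s => γ (Set.projIcc 0 T hT s)

/-- `γ` is an integral curve of `b`:  `s ↦ b(s,γ(s))` is integrable on `(0,T)` and
`γ(t) = γ(0) + ∫_0^t b(s,γ(s)) ds` for all `t ∈ [0,T]`, the integral computed in `ℝ^d`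
and projected to the torus. -/
def IsIntegralCurveOf {T : ℝ} {d : ℕ} (hT : 0 ≤ T) (b : ℝ → Torus d → Vec d)
    (γ : PathSpace T d) : Prop :=
  MeasureTheory.IntegrableOn (fun s => b s (extendPath hT γ s)) (Set.Ioc 0 T) volume ∧
  ∀ t : Set.Icc (0 : ℝ) T,
    γ t = γ ⟨0, Set.left_mem_Icc.2 hT⟩
      + projT d (∫ s in Set.Ioc (0 : ℝ) (t : ℝ), b s (extendPath hT γ s))

/-- `η` is concentrated on integral curves of `b`. -/
def ConcentratedOnCurves {T : ℝ} {d : ℕ} (hT : 0 ≤ T) (b : ℝ → Torus d → Vec d)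
    (η : Measure (PathSpace T d)) : Prop :=
  ∀ᵐ γ ∂η, IsIntegralCurveOf hT b γ

/-- `{k y}_{y}` is a disintegration of `μ` with respect to `f` and `ν`:
a Borel family of measures, with `k y` concentrated on `f⁻¹(y)` and
`μ(A) = ∫ k y (A) dν(y)` for every Borel set `A`. -/
def IsDisintegration {X Y : Type*} [MeasurableSpace X] [MeasurableSpace Y]
    (μ : Measure X) (f : X → Y) (ν : Measure Y) (k : Y → Measure X) : Prop :=
  (∀ A : Set X, MeasurableSet A → Measurable fun y => k y A) ∧
  (∀ y : Y, k y ((f ⁻¹' {y})ᶜ) = 0) ∧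
  (∀ A : Set X, MeasurableSet A → μ A = ∫⁻ y, k y A ∂ν)

/-- A disintegration consisting of probability measures. -/
def IsProbDisintegration {X Y : Type*} [MeasurableSpace X] [MeasurableSpace Y]
    (μ : Measure X) (f : X → Y) (ν : Measure Y) (k : Y → Measure X) : Prop :=
  (∀ y : Y, IsProbabilityMeasure (k y)) ∧ IsDisintegration μ f ν k


/-- The set `K_N` of absolutely continuous paths with derivative of squared `L^2` norm
at most `N`. -/
def KN (T : ℝ) (d : ℕ) (hT : 0 ≤ T) (N : ℕ) : Set (PathSpace T d) :=
  {γ | ∃ v : ℝ → Vec d, MeasureTheory.IntegrableOn v (Set.Ioc 0 T) volume ∧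
    (∫⁻ s in Set.Ioc (0 : ℝ) T, (‖v s‖₊ : ℝ≥0∞) ^ 2) ≤ (N : ℝ≥0∞) ∧
    ∀ t : Set.Icc (0 : ℝ) T,
      γ t = γ ⟨0, Set.left_mem_Icc.2 hT⟩ + projT d (∫ s in Set.Ioc (0 : ℝ) (t : ℝ), v s)}


namespace Stmt14Aux


variable {T : ℝ} {d : ℕ}

abbrev muT (T : ℝ) : Measure ℝ := (volume : Measure ℝ).restrict (Set.Ioc (0:ℝ) T)

abbrev E2 (T : ℝ) (d : ℕ) := Lp (Vec d) 2 (muT T)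

def uu (T : ℝ) (d : ℕ) (t : ℝ) (i : Fin d) : E2 T d :=
  indicatorConstLp 2 (measurableSet_Ioc : MeasurableSet (Set.Ioc (0:ℝ) t)) (measure_ne_top _ _)
    (EuclideanSpace.single i (1:ℝ))

lemma uu_coeFn (t : ℝ) (i : Fin d) :
    (↑↑(uu T d t i) : ℝ → Vec d) =ᵐ[muT T]
      (Set.Ioc (0:ℝ) t).indicator fun _ => EuclideanSpace.single i (1:ℝ) :=
  indicatorConstLp_coeFn

lemma uu_sub {t t' : ℝ} (h0 : 0 ≤ t') (h : t' ≤ t) (i : Fin d) :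
    uu T d t i - uu T d t' i
      = indicatorConstLp 2 (measurableSet_Ioc : MeasurableSet (Set.Ioc t' t)) (measure_ne_top _ _)
          (EuclideanSpace.single i (1:ℝ)) := by
  have hdisj : Disjoint (Set.Ioc (0:ℝ) t') (Set.Ioc t' t) := by
    refine Set.disjoint_left.2 ?_
    rintro a ⟨_, ha2⟩ ⟨ha3, _⟩
    exact (not_le.2 ha3) ha2
  have hset : Set.Ioc (0:ℝ) t' ∪ Set.Ioc t' t = Set.Ioc 0 t := Set.Ioc_union_Ioc_eq_Ioc h0 h
  apply Lp.ext
  filter_upwards [Lp.coeFn_sub (uu T d t i) (uu T d t' i), uu_coeFn (T := T) t i,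
    uu_coeFn (T := T) t' i,
    indicatorConstLp_coeFn (μ := muT T) (p := 2)
      (hs := (measurableSet_Ioc : MeasurableSet (Set.Ioc t' t)))
      (hμs := measure_ne_top _ _) (c := EuclideanSpace.single i (1:ℝ))] with a h1 h2 h3 h4
  rw [h1, Pi.sub_apply, h2, h3, h4, ← hset, Set.indicator_union_of_disjoint hdisj]
  module

lemma dist_uu_le {t t' : ℝ} (h0' : 0 ≤ t) (h0 : 0 ≤ t') (i : Fin d) :
    dist (uu T d t i) (uu T d t' i) ≤ Real.sqrt |t - t'| := by
  rcases le_total t' t with h | h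
  · rw [dist_eq_norm, uu_sub h0 h i,
      norm_indicatorConstLp (by norm_num) (by norm_num), EuclideanSpace.norm_single, norm_one,
      one_mul]
    have h2 : ((2:ℝ≥0∞).toReal) = (2:ℝ) := by simp
    rw [h2]
    have hle : ((muT T) (Set.Ioc t' t)).toReal ≤ |t - t'| := by
      refine ENNReal.toReal_le_of_le_ofReal (abs_nonneg _) ?_
      calc (muT T) (Set.Ioc t' t) ≤ (volume : Measure ℝ) (Set.Ioc t' t) :=
            Measure.restrict_le_self _
        _ = ENNReal.ofReal (t - t') := by rw [Real.volume_Ioc]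
        _ ≤ ENNReal.ofReal |t - t'| := ENNReal.ofReal_le_ofReal (le_abs_self _)
    calc ((muT T) (Set.Ioc t' t)).toReal ^ (1 / (2:ℝ))
        = Real.sqrt (((muT T) (Set.Ioc t' t)).toReal) := (Real.sqrt_eq_rpow _).symm
      _ ≤ Real.sqrt |t - t'| := Real.sqrt_le_sqrt hle
  · rw [dist_comm, abs_sub_comm]
    rw [dist_eq_norm, uu_sub h0' h i,
      norm_indicatorConstLp (by norm_num) (by norm_num), EuclideanSpace.norm_single, norm_one,
      one_mul]
    have h2 : ((2:ℝ≥0∞).toReal) = (2:ℝ) := by simp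
    rw [h2]
    have hle : ((muT T) (Set.Ioc t t')).toReal ≤ |t' - t| := by
      refine ENNReal.toReal_le_of_le_ofReal (abs_nonneg _) ?_
      calc (muT T) (Set.Ioc t t') ≤ (volume : Measure ℝ) (Set.Ioc t t') :=
            Measure.restrict_le_self _
        _ = ENNReal.ofReal (t' - t) := by rw [Real.volume_Ioc]
        _ ≤ ENNReal.ofReal |t' - t| := ENNReal.ofReal_le_ofReal (le_abs_self _)
    calc ((muT T) (Set.Ioc t t')).toReal ^ (1 / (2:ℝ))
        = Real.sqrt (((muT T) (Set.Ioc t t')).toReal) := (Real.sqrt_eq_rpow _).symm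
      _ ≤ Real.sqrt |t' - t| := Real.sqrt_le_sqrt hle

lemma continuous_uu (i : Fin d) : Continuous fun t : Set.Icc (0:ℝ) T => uu T d (↑t) i := by
  rw [Metric.continuous_iff]
  intro t ε hε
  refine ⟨ε ^ 2, by positivity, fun t' ht' => ?_⟩
  refine lt_of_le_of_lt (dist_uu_le t'.2.1 t.2.1 i) ?_
  rw [Real.sqrt_lt' hε]
  rwa [Subtype.dist_eq, Real.dist_eq] at ht'

lemma restrict_muT {t : ℝ} (htT : t ≤ T) :
    (muT T).restrict (Set.Ioc (0:ℝ) t) = (volume : Measure ℝ).restrict (Set.Ioc (0:ℝ) t) := by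
  rw [Measure.restrict_restrict measurableSet_Ioc, Set.Ioc_inter_Ioc, sup_idem,
    inf_eq_left.2 htT]

lemma inner_uu (w : E2 T d) {t : ℝ} (htT : t ≤ T) (i : Fin d) :
    (inner ℝ w (uu T d t i) : ℝ)
      = ∫ a in Set.Ioc (0:ℝ) t, (↑↑w : ℝ → Vec d) a i ∂(volume : Measure ℝ) := by
  rw [L2.inner_def]
  have hstep : ∫ a, (inner ℝ ((↑↑w : ℝ → Vec d) a) ((↑↑(uu T d t i) : ℝ → Vec d) a) : ℝ) ∂(muT T)
      = ∫ a, (Set.Ioc (0:ℝ) t).indicator (fun a => (↑↑w : ℝ → Vec d) a i) a ∂(muT T) := by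
    apply integral_congr_ae
    filter_upwards [uu_coeFn (T := T) t i] with a ha
    rw [ha]
    by_cases hmem : a ∈ Set.Ioc (0:ℝ) t
    · rw [Set.indicator_of_mem hmem, Set.indicator_of_mem hmem,
        EuclideanSpace.inner_single_right]
      simp
    · rw [Set.indicator_of_notMem hmem, Set.indicator_of_notMem hmem, inner_zero_right]
  rw [hstep, integral_indicator measurableSet_Ioc, restrict_muT htT]

lemma integrable_coe (w : E2 T d) : Integrable (↑↑w : ℝ → Vec d) (muT T) :=
  (Lp.memLp w).integrable (by norm_num)

lemma integral_repr (w : E2 T d) {t : ℝ} (htT : t ≤ T) (i : Fin d) :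
    (inner ℝ w (uu T d t i) : ℝ)
      = (∫ a in Set.Ioc (0:ℝ) t, (↑↑w : ℝ → Vec d) a ∂(volume : Measure ℝ)) i := by
  rw [inner_uu w htT i]
  have hint : Integrable (↑↑w : ℝ → Vec d) ((volume : Measure ℝ).restrict (Set.Ioc (0:ℝ) t)) := by
    rw [← restrict_muT htT]
    exact (integrable_coe w).restrict
  calc ∫ a in Set.Ioc (0:ℝ) t, (↑↑w : ℝ → Vec d) a i ∂(volume : Measure ℝ)
      = ∫ a in Set.Ioc (0:ℝ) t, (EuclideanSpace.proj (𝕜 := ℝ) i) ((↑↑w : ℝ → Vec d) a)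
          ∂(volume : Measure ℝ) := rfl
    _ = (EuclideanSpace.proj (𝕜 := ℝ) i) (∫ a in Set.Ioc (0:ℝ) t, (↑↑w : ℝ → Vec d) a
          ∂(volume : Measure ℝ)) := ContinuousLinearMap.integral_comp_comm _ hint
    _ = _ := rfl

lemma continuous_eval_ball {E : Type*} [NormedAddCommGroup E] [NormedSpace ℝ E] (r : ℝ) :
    Continuous fun p :
        (⇑(WeakDual.toStrongDual (𝕜 := ℝ) (E := E)) ⁻¹' Metric.closedBall 0 r) × E =>
      (p.1 : WeakDual ℝ E) p.2 := by
  rw [continuous_iff_continuousAt]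
  rintro ⟨φ₀, u₀⟩
  have hbound : ∀ p : (⇑(WeakDual.toStrongDual (𝕜 := ℝ) (E := E)) ⁻¹'
      Metric.closedBall 0 r) × E,
      dist ((p.1 : WeakDual ℝ E) p.2) ((φ₀ : WeakDual ℝ E) u₀)
        ≤ r * ‖p.2 - u₀‖ + dist ((p.1 : WeakDual ℝ E) u₀) ((φ₀ : WeakDual ℝ E) u₀) := by
    rintro ⟨φ, u⟩
    have h1 : dist ((φ : WeakDual ℝ E) u) ((φ : WeakDual ℝ E) u₀) ≤ r * ‖u - u₀‖ := by
      rw [dist_eq_norm, ← map_sub (φ : WeakDual ℝ E) u u₀]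
      calc ‖(φ : WeakDual ℝ E) (u - u₀)‖
          ≤ ‖WeakDual.toStrongDual (φ : WeakDual ℝ E)‖ * ‖u - u₀‖ :=
            (WeakDual.toStrongDual (φ : WeakDual ℝ E)).le_opNorm (u - u₀)
        _ ≤ r * ‖u - u₀‖ :=
            mul_le_mul_of_nonneg_right (mem_closedBall_zero_iff.1 φ.2) (norm_nonneg _)
    calc dist ((φ : WeakDual ℝ E) u) ((φ₀ : WeakDual ℝ E) u₀)
        ≤ dist ((φ : WeakDual ℝ E) u) ((φ : WeakDual ℝ E) u₀)
            + dist ((φ : WeakDual ℝ E) u₀) ((φ₀ : WeakDual ℝ E) u₀) := dist_triangle _ _ _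
      _ ≤ _ := add_le_add_left h1 _
  have hcont : Continuous fun p : (⇑(WeakDual.toStrongDual (𝕜 := ℝ) (E := E)) ⁻¹'
      Metric.closedBall 0 r) × E =>
      r * ‖p.2 - u₀‖ + dist ((p.1 : WeakDual ℝ E) u₀) ((φ₀ : WeakDual ℝ E) u₀) :=
    (continuous_const.mul ((continuous_snd.sub continuous_const).norm)).add
      (((WeakDual.eval_continuous u₀).comp (continuous_subtype_val.comp continuous_fst)).dist
        continuous_const)
  rw [ContinuousAt, tendsto_iff_dist_tendsto_zero]
  refine squeeze_zero (fun p => dist_nonneg) hbound ?_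
  have := hcont.tendsto (⟨φ₀, u₀⟩ : (⇑(WeakDual.toStrongDual (𝕜 := ℝ) (E := E)) ⁻¹'
      Metric.closedBall 0 r) × E)
  simpa using this


lemma lintegral_sq_eLpNorm (f : ℝ → Vec d) :
    ∫⁻ s, ((‖f s‖₊ : ℝ≥0∞)) ^ (2:ℕ) ∂(muT T) = (eLpNorm f 2 (muT T)) ^ (2:ℝ) := by
  rw [eLpNorm_eq_lintegral_rpow_enorm_toReal (by norm_num) (by norm_num)]
  rw [ENNReal.toReal_ofNat, ← ENNReal.rpow_mul]
  norm_num
  simp only [enorm_eq_nnnorm]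

lemma continuous_projT : Continuous (projT d) := by
  apply continuous_pi
  intro i
  exact (AddCircle.continuous_mk' 1).comp (EuclideanSpace.proj (𝕜 := ℝ) i).continuous

lemma projT_zero : projT d 0 = 0 := by
  funext i
  simp [projT]

lemma isCompact_KN (T : ℝ) (hT : 0 < T) (d : ℕ) (N : ℕ) : IsCompact (KN T d hT.le N) := by
  classical
  set r : ℝ := Real.sqrt N with hr
  set Sset : Set (WeakDual ℝ (E2 T d)) :=
    ⇑(WeakDual.toStrongDual (𝕜 := ℝ) (E := E2 T d)) ⁻¹' Metric.closedBall 0 r with hSset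
  haveI : CompactSpace Sset := isCompact_iff_compactSpace.1 (WeakDual.isCompact_closedBall (0 : StrongDual ℝ (E2 T d)) r)
  set g : (Torus d × Sset) × Set.Icc (0:ℝ) T → Torus d := fun p =>
    p.1.1 + projT d ((EuclideanSpace.equiv (Fin d) ℝ).symm
      fun i => (p.1.2 : WeakDual ℝ (E2 T d)) (uu T d (↑p.2) i)) with hgdef
  have hgc : Continuous g := by
    refine Continuous.add (continuous_fst.comp continuous_fst) ?_
    refine continuous_projT.comp ?_
    refine (EuclideanSpace.equiv (Fin d) ℝ).symm.continuous.comp ?_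
    refine continuous_pi fun i => ?_
    exact (continuous_eval_ball r).comp
      ((continuous_snd.comp continuous_fst).prodMk ((continuous_uu i).comp continuous_snd))
  set Ψ : C(Torus d × Sset, PathSpace T d) := ContinuousMap.curry ⟨g, hgc⟩ with hΨ
  have hΨapp : ∀ (x₀ : Torus d) (φ : Sset) (t : Set.Icc (0:ℝ) T),
      Ψ (x₀, φ) t = x₀ + projT d ((EuclideanSpace.equiv (Fin d) ℝ).symm
        fun i => (φ : WeakDual ℝ (E2 T d)) (uu T d (↑t) i)) := fun _ _ _ => rfl
  have hrange : KN T d hT.le N = Set.range ⇑Ψ := by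
    ext γ
    constructor
    · rintro ⟨v, hvint, hvN, hvpath⟩
      have hvN' : (∫⁻ s, ((‖v s‖₊ : ℝ≥0∞)) ^ (2:ℝ) ∂(muT T)) ≤ (N : ℝ≥0∞) := by
        calc (∫⁻ s, ((‖v s‖₊ : ℝ≥0∞)) ^ (2:ℝ) ∂(muT T))
            = ∫⁻ s, ((‖v s‖₊ : ℝ≥0∞)) ^ (2:ℕ) ∂(muT T) := by
              refine lintegral_congr fun s => ?_
              rw [show ((2:ℝ)) = ((2:ℕ) : ℝ) by norm_num, ENNReal.rpow_natCast]
          _ ≤ (N : ℝ≥0∞) := hvN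
      have hmem : MemLp v 2 (muT T) := by
        refine ⟨hvint.1, ?_⟩
        rw [eLpNorm_eq_lintegral_rpow_enorm_toReal (by norm_num) (by norm_num)]
        simp only [ENNReal.toReal_ofNat]
        refine lt_of_le_of_lt (ENNReal.rpow_le_rpow hvN' (by norm_num)) ?_
        exact ENNReal.rpow_lt_top_of_nonneg (by norm_num) (ENNReal.natCast_ne_top N)
      set w : E2 T d := hmem.toLp v with hwdef
      have hw : (↑↑w : ℝ → Vec d) =ᵐ[muT T] v := hmem.coeFn_toLp
      have heLp : eLpNorm v 2 (muT T) ≤ ENNReal.ofReal r := by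
        rw [eLpNorm_eq_lintegral_rpow_enorm_toReal (by norm_num) (by norm_num)]
        simp only [ENNReal.toReal_ofNat]
        have : (N : ℝ≥0∞) ^ (1/(2:ℝ)) = ENNReal.ofReal r := by
          rw [hr, Real.sqrt_eq_rpow, ← ENNReal.ofReal_rpow_of_nonneg (Nat.cast_nonneg N)
            (by norm_num), ENNReal.ofReal_natCast]
        rw [← this]
        exact ENNReal.rpow_le_rpow hvN' (by norm_num)
      have hwnorm : ‖w‖ ≤ r := by
        rw [hwdef, Lp.norm_toLp]
        exact ENNReal.toReal_le_of_le_ofReal (Real.sqrt_nonneg _) heLp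
      set D := InnerProductSpace.toDual ℝ (E2 T d) w with hD
      set φ : WeakDual ℝ (E2 T d) := StrongDual.toWeakDual D with hφ
      have hφS : φ ∈ Sset := by
        rw [hSset, Set.mem_preimage, mem_closedBall_zero_iff]
        have : ‖WeakDual.toStrongDual φ‖ = ‖D‖ := rfl
        rw [this, hD, LinearIsometryEquiv.norm_map]
        exact hwnorm
      refine ⟨(γ ⟨0, Set.left_mem_Icc.2 hT.le⟩, ⟨φ, hφS⟩), ?_⟩
      apply ContinuousMap.ext
      intro t
      rw [hΨapp]
      have hIeq : (∫ a in Set.Ioc (0:ℝ) (↑t : ℝ), (↑↑w : ℝ → Vec d) a ∂(volume : Measure ℝ))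
          = ∫ a in Set.Ioc (0:ℝ) (↑t : ℝ), v a ∂(volume : Measure ℝ) := by
        refine integral_congr_ae ?_
        rw [← restrict_muT t.2.2]
        exact ae_restrict_of_ae hw
      have hcoord : (fun i => φ (uu T d (↑t) i))
          = fun i => (∫ a in Set.Ioc (0:ℝ) (↑t : ℝ), v a ∂(volume : Measure ℝ)) i := by
        funext i
        have h1 : φ (uu T d (↑t) i) = (inner ℝ w (uu T d (↑t) i) : ℝ) := rfl
        rw [h1, integral_repr w t.2.2 i, hIeq]
      rw [hcoord]
      have heq : (EuclideanSpace.equiv (Fin d) ℝ).symm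
          (fun i => (∫ a in Set.Ioc (0:ℝ) (↑t), v a ∂(volume : Measure ℝ)) i)
          = ∫ a in Set.Ioc (0:ℝ) (↑t), v a ∂(volume : Measure ℝ) := by
        rw [ContinuousLinearEquiv.symm_apply_eq]
        rfl
      rw [heq]
      exact (hvpath t).symm
    · rintro ⟨⟨x₀, φ, hφS⟩, rfl⟩
      set w : E2 T d := (InnerProductSpace.toDual ℝ (E2 T d)).symm (WeakDual.toStrongDual φ)
        with hwdef
      have hφw : ∀ u : E2 T d, φ u = (inner ℝ w u : ℝ) := by
        intro u
        rw [hwdef, InnerProductSpace.toDual_symm_apply]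
        rfl
      have hwnorm : ‖w‖ ≤ r := by
        rw [hwdef, LinearIsometryEquiv.norm_map]
        exact mem_closedBall_zero_iff.1 hφS
      have hcoord : ∀ t : Set.Icc (0:ℝ) T, (fun i => φ (uu T d (↑t) i))
          = fun i => (∫ a in Set.Ioc (0:ℝ) (↑t), (↑↑w : ℝ → Vec d) a
              ∂(volume : Measure ℝ)) i := by
        intro t
        funext i
        rw [hφw, integral_repr w t.2.2 i]
      have hΨeq : ∀ t : Set.Icc (0:ℝ) T, Ψ (x₀, ⟨φ, hφS⟩) t
          = x₀ + projT d (∫ a in Set.Ioc (0:ℝ) (↑t), (↑↑w : ℝ → Vec d) a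
              ∂(volume : Measure ℝ)) := by
        intro t
        have heq : (EuclideanSpace.equiv (Fin d) ℝ).symm
            (fun i => (∫ a in Set.Ioc (0:ℝ) (↑t : ℝ), (↑↑w : ℝ → Vec d) a
              ∂(volume : Measure ℝ)) i)
            = ∫ a in Set.Ioc (0:ℝ) (↑t : ℝ), (↑↑w : ℝ → Vec d) a ∂(volume : Measure ℝ) := by
          rw [ContinuousLinearEquiv.symm_apply_eq]
          rfl
        rw [hΨapp, hcoord t, heq]
      have hΨ0 : Ψ (x₀, ⟨φ, hφS⟩) ⟨0, Set.left_mem_Icc.2 hT.le⟩ = x₀ := by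
        rw [hΨeq ⟨0, Set.left_mem_Icc.2 hT.le⟩,
          show ((⟨0, Set.left_mem_Icc.2 hT.le⟩ : Set.Icc (0:ℝ) T) : ℝ) = (0:ℝ) from rfl,
          Set.Ioc_self, Measure.restrict_empty, integral_zero_measure, projT_zero, add_zero]
      refine ⟨fun a => (↑↑w : ℝ → Vec d) a, ?_, ?_, ?_⟩
      · exact integrable_coe w
      · have h1 : eLpNorm (↑↑w : ℝ → Vec d) 2 (muT T) ≤ ENNReal.ofReal r := by
          have h2 : eLpNorm (↑↑w : ℝ → Vec d) 2 (muT T) = ENNReal.ofReal ‖w‖ := by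
            rw [Lp.norm_def, ENNReal.ofReal_toReal (Lp.eLpNorm_ne_top w)]
          rw [h2]
          exact ENNReal.ofReal_le_ofReal hwnorm
        have hL : (∫⁻ s in Set.Ioc (0:ℝ) T, ((‖(↑↑w : ℝ → Vec d) s‖₊ : ℝ≥0∞)) ^ (2:ℕ))
            = (eLpNorm (↑↑w : ℝ → Vec d) 2 (muT T)) ^ (2:ℝ) := lintegral_sq_eLpNorm _
        rw [hL]
        calc (eLpNorm (↑↑w : ℝ → Vec d) 2 (muT T)) ^ (2:ℝ)
            ≤ (ENNReal.ofReal r) ^ (2:ℝ) := ENNReal.rpow_le_rpow h1 (by norm_num)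
          _ = (N : ℝ≥0∞) := by
              rw [hr, ENNReal.ofReal_rpow_of_nonneg (Real.sqrt_nonneg _) (by norm_num),
                Real.rpow_two, Real.sq_sqrt (Nat.cast_nonneg N), ENNReal.ofReal_natCast]
      · intro t
        rw [hΨeq t, hΨ0]
  rw [hrange]
  exact isCompact_range Ψ.continuous


end Stmt14Aux

/-- each `K_N` is compact, `η(K_Nᶜ) ≤ (1/N)‖b‖_{L²}²`, and `η` is tight. -/
theorem stmt_14 (T : ℝ) (hT : 0 < T) (d : ℕ) (b : ℝ → Torus d → Vec d)
    (hb : Measurable (Function.uncurry b))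
    (hbL2 : ∫⁻ s in Set.Ioo 0 T, ∫⁻ x, (‖b s x‖₊ : ℝ≥0∞) ^ 2 ∂(volume : Measure (Torus d)) < ∞)
    (η : Measure (PathSpace T d)) [IsProbabilityMeasure η]
    (hcurves : ConcentratedOnCurves hT.le b η)
    (hinc : ∀ s : Set.Icc (0 : ℝ) T,
      Measure.map (fun γ : PathSpace T d => γ s) η = (volume : Measure (Torus d))) :
    (∀ N : ℕ, IsCompact (KN T d hT.le N)) ∧
    (∀ N : ℕ, η (KN T d hT.le N)ᶜ
      ≤ (N : ℝ≥0∞)⁻¹ * ∫⁻ s in Set.Ioo 0 T, ∫⁻ x, (‖b s x‖₊ : ℝ≥0∞) ^ 2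
          ∂(volume : Measure (Torus d))) ∧
    (∀ ε : ℝ≥0∞, 0 < ε → ∃ K : Set (PathSpace T d), IsCompact K ∧ η Kᶜ ≤ ε) := by
  have hcompact : ∀ N : ℕ, IsCompact (KN T d hT.le N) :=
    fun N => Stmt14Aux.isCompact_KN T hT d N
  set I : ℝ≥0∞ :=
    ∫⁻ s in Set.Ioo 0 T, ∫⁻ x, (‖b s x‖₊ : ℝ≥0∞) ^ 2 ∂(volume : Measure (Torus d)) with hI
  -- the function γ ↦ ∫₀ᵀ |b(s,γ(s))|² ds
  set G : PathSpace T d → ℝ≥0∞ := fun γ =>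
    ∫⁻ s in Set.Ioc (0:ℝ) T, (‖b s (extendPath hT.le γ s)‖₊ : ℝ≥0∞) ^ 2 with hG
  -- joint measurability
  have hjm : Measurable fun q : PathSpace T d × ℝ =>
      (‖b q.2 (extendPath hT.le q.1 q.2)‖₊ : ℝ≥0∞) ^ 2 := by
    have hev : Continuous fun q : PathSpace T d × ℝ => extendPath hT.le q.1 q.2 := by
      have : Continuous fun q : PathSpace T d × ℝ => (q.1, Set.projIcc 0 T hT.le q.2) :=
        continuous_fst.prodMk (continuous_projIcc.comp continuous_snd)
      exact continuous_eval.comp this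
    have hbm : Measurable fun q : PathSpace T d × ℝ => b q.2 (extendPath hT.le q.1 q.2) :=
      hb.comp (measurable_snd.prodMk hev.measurable)
    exact (hbm.nnnorm.coe_nnreal_ennreal).pow_const 2
  have hGmeas : Measurable G :=
    Measurable.lintegral_prod_right (f := fun γ s =>
      (‖b s (extendPath hT.le γ s)‖₊ : ℝ≥0∞) ^ 2) hjm
  -- Tonelli + pushforward: ∫ G dη = I
  have htot : ∫⁻ γ, G γ ∂η = I := by
    rw [hG]
    have hswap : ∫⁻ γ, ∫⁻ s in Set.Ioc (0:ℝ) T,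
          (‖b s (extendPath hT.le γ s)‖₊ : ℝ≥0∞) ^ 2 ∂volume ∂η
        = ∫⁻ s in Set.Ioc (0:ℝ) T, ∫⁻ γ,
          (‖b s (extendPath hT.le γ s)‖₊ : ℝ≥0∞) ^ 2 ∂η ∂volume :=
      lintegral_lintegral_swap hjm.aemeasurable
    rw [hswap]
    have hpt : ∀ s ∈ Set.Ioc (0:ℝ) T,
        (∫⁻ γ, (‖b s (extendPath hT.le γ s)‖₊ : ℝ≥0∞) ^ 2 ∂η)
          = ∫⁻ x, (‖b s x‖₊ : ℝ≥0∞) ^ 2 ∂(volume : Measure (Torus d)) := by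
      intro s hs
      have hsIcc : s ∈ Set.Icc (0:ℝ) T := ⟨hs.1.le, hs.2⟩
      have hext : ∀ γ : PathSpace T d, extendPath hT.le γ s = γ ⟨s, hsIcc⟩ := by
        intro γ
        unfold extendPath
        rw [Set.projIcc_of_mem hT.le hsIcc]
      have hbsm : Measurable fun x : Torus d => (‖b s x‖₊ : ℝ≥0∞) ^ 2 := by
        have : Measurable (b s) := hb.of_uncurry_left
        exact (this.nnnorm.coe_nnreal_ennreal).pow_const 2
      have hevm : Measurable fun γ : PathSpace T d => γ ⟨s, hsIcc⟩ :=
        (continuous_eval_const (⟨s, hsIcc⟩ : Set.Icc (0:ℝ) T)).measurable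
      calc ∫⁻ γ, (‖b s (extendPath hT.le γ s)‖₊ : ℝ≥0∞) ^ 2 ∂η
          = ∫⁻ γ, (‖b s (γ ⟨s, hsIcc⟩)‖₊ : ℝ≥0∞) ^ 2 ∂η := by
            refine lintegral_congr fun γ => ?_
            rw [hext γ]
        _ = ∫⁻ x, (‖b s x‖₊ : ℝ≥0∞) ^ 2
              ∂(Measure.map (fun γ : PathSpace T d => γ ⟨s, hsIcc⟩) η) :=
            (lintegral_map hbsm hevm).symm
        _ = ∫⁻ x, (‖b s x‖₊ : ℝ≥0∞) ^ 2 ∂(volume : Measure (Torus d)) := by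
            rw [hinc ⟨s, hsIcc⟩]
    rw [setLIntegral_congr_fun measurableSet_Ioc hpt]
    rw [hI, ← Measure.restrict_congr_set Ioo_ae_eq_Ioc]
  -- a.e. characterization: outside KN, G is large
  have hae : ∀ N : ℕ, η (KN T d hT.le N)ᶜ ≤ η {γ | (N : ℝ≥0∞) < G γ} := by
    intro N
    have hsub : (KN T d hT.le N)ᶜ ⊆ {γ | (N : ℝ≥0∞) < G γ} ∪ {γ | ¬ IsIntegralCurveOf hT.le b γ} := by
      intro γ hγ
      by_cases hc : IsIntegralCurveOf hT.le b γ
      · left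
        by_contra hlt
        exact hγ ⟨fun s => b s (extendPath hT.le γ s), hc.1, not_lt.1 hlt, hc.2⟩
      · right
        exact hc
    calc η (KN T d hT.le N)ᶜ
        ≤ η ({γ | (N : ℝ≥0∞) < G γ} ∪ {γ | ¬ IsIntegralCurveOf hT.le b γ}) := measure_mono hsub
      _ ≤ η {γ | (N : ℝ≥0∞) < G γ} + η {γ | ¬ IsIntegralCurveOf hT.le b γ} := measure_union_le _ _
      _ = η {γ | (N : ℝ≥0∞) < G γ} := by
          rw [show η {γ | ¬ IsIntegralCurveOf hT.le b γ} = 0 from hcurves, add_zero]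
  have hcheb : ∀ N : ℕ, η {γ | (N : ℝ≥0∞) < G γ} ≤ (N : ℝ≥0∞)⁻¹ * I := by
    intro N
    rcases Nat.eq_zero_or_pos N with hN0 | hNpos
    · subst hN0
      by_cases hI0 : I = 0
      · have hG0 : G =ᵐ[η] 0 := by
          rw [← lintegral_eq_zero_iff hGmeas, htot]
          exact hI0
        have hG0' : ∀ᵐ γ ∂η, G γ = 0 := hG0
        have h0 : η {γ | (0:ℝ≥0∞) < G γ} = 0 :=
          measure_mono_null (fun γ h => (h : (0:ℝ≥0∞) < G γ).ne') (ae_iff.1 hG0')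
        exact le_trans (le_of_eq (by simpa using h0)) zero_le
      · have : ((0:ℕ) : ℝ≥0∞)⁻¹ * I = ⊤ := by
          simp [ENNReal.top_mul hI0]
        rw [this]
        exact le_top
    · clear hbL2
      have hne0 : ((N:ℝ≥0∞)) ≠ 0 := Nat.cast_ne_zero.2 hNpos.ne'
      have hnetop : ((N:ℝ≥0∞)) ≠ ⊤ := ENNReal.natCast_ne_top N
      have h1 : (N : ℝ≥0∞) * η {γ | (N : ℝ≥0∞) ≤ G γ} ≤ ∫⁻ γ, G γ ∂η :=
        mul_meas_ge_le_lintegral₀ hGmeas.aemeasurable _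
      have h2 : η {γ | (N : ℝ≥0∞) < G γ} ≤ η {γ | (N : ℝ≥0∞) ≤ G γ} := by
        refine measure_mono fun γ h => ?_
        have h' : (N : ℝ≥0∞) < G γ := h
        exact h'.le
      calc η {γ | (N : ℝ≥0∞) < G γ} ≤ η {γ | (N : ℝ≥0∞) ≤ G γ} := h2
        _ = (N : ℝ≥0∞)⁻¹ * ((N : ℝ≥0∞) * η {γ | (N : ℝ≥0∞) ≤ G γ}) := by
            rw [← mul_assoc, ENNReal.inv_mul_cancel hne0 hnetop, one_mul]
        _ ≤ (N : ℝ≥0∞)⁻¹ * (∫⁻ γ, G γ ∂η) := mul_le_mul_right h1 _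
        _ = (N : ℝ≥0∞)⁻¹ * I := by rw [htot]
  refine ⟨hcompact, fun N => le_trans (hae N) (hcheb N), ?_⟩
  intro ε hε
  by_cases hεtop : ε = ⊤
  · exact ⟨KN T d hT.le 1, hcompact 1, by rw [hεtop]; exact le_top⟩
  have hIne : I ≠ ⊤ := hbL2.ne
  have hdiv : I / ε ≠ ⊤ := by
    exact ENNReal.div_lt_top hIne hε.ne' |>.ne
  obtain ⟨N, hN⟩ := ENNReal.exists_nat_gt hdiv
  have hN0 : ((N:ℝ≥0∞)) ≠ 0 := by
    refine fun h => ?_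
    rw [h] at hN
    exact (not_lt.2 zero_le) hN
  refine ⟨KN T d hT.le N, hcompact N, ?_⟩
  refine le_trans (le_trans (hae N) (hcheb N)) ?_
  have hlt : I < (N:ℝ≥0∞) * ε := (ENNReal.div_lt_iff (Or.inl hε.ne') (Or.inl hεtop)).1 hN
  calc (N : ℝ≥0∞)⁻¹ * I ≤ (N : ℝ≥0∞)⁻¹ * ((N:ℝ≥0∞) * ε) := mul_le_mul_right hlt.le _
    _ = ε := by rw [← mul_assoc, ENNReal.inv_mul_cancel hN0 (ENNReal.natCast_ne_top N), one_mul]
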